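/- Let A be an orthogonal array OA(r, N, d, k) such that some N − s of its columns form a subarray with minimum Hamming distance MD ≥ k+1, and for each w = 1,…,t let B_w be a mixed orthogonal array of strength k with d rows and m_w columns of alphabet sizes d_{1w},…,d_{m_w w}. Then for all nonnegative integers n₁,…,n_t with 1 ≤ n₁+⋯+n_t ≤ s and all nonnegative integers v_{iw} (1 ≤ w ≤ t, 1 ≤ i ≤ m_w) with v_{iw} ≤ n_w and Σ_{j=1}^{t}Σ_{i=1}^{m_j} v_{ij} ≥ 1, there exists an irredundant mixed orthogonal array IrMOA(r, N − s + Σ_{j=1}^{t}Σ_{i=1}^{m_j} v_{ij}, d^{N−s}d_{11}^{v_{11}}⋯d_{m₁1}^{v_{m₁1}}⋯d_{1t}^{v_{1t}}⋯d_{m_t t}^{v_{m_t t}}, k). -/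

import Mathlib

open Finset

/-- The Hamming distance between two rows of an array: the number of columns
in which the rows differ. -/
def hamDist {ι κ : Type*} [Fintype κ] (A : ι → κ → ℕ) (i i' : ι) : ℕ :=
  (Finset.univ.filter fun j => A i j ≠ A i' j).card

/-- `MD(A)`: the minimum Hamming distance over all pairs of distinct rows. -/
noncomputable def minDist {ι κ : Type*} [Fintype κ] (A : ι → κ → ℕ) : ℕ :=
  sInf {n | ∃ i i', i ≠ i' ∧ hamDist A i i' = n}

/-- `A` is a mixed orthogonal array of strength `k` (rows indexed by `ι`,
columns by `κ`, column `j` taking values in `{0, …, lv j − 1}`): in the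
subarray given by any choice of at most `k` columns, every tuple of symbols
occurs equally often as a row, namely (number of rows)/(product of the levels
of the chosen columns) times. -/
def IsMOA {ι κ : Type*} [Fintype ι] [Fintype κ] [DecidableEq κ]
    (A : ι → κ → ℕ) (lv : κ → ℕ) (k : ℕ) : Prop :=
  (∀ i j, A i j < lv j) ∧
  ∀ S : Finset κ, S.card ≤ k → ∀ x : κ → ℕ, (∀ j ∈ S, x j < lv j) →
    (Finset.univ.filter fun i : ι => ∀ j ∈ S, A i j = x j).card * ∏ j ∈ S, lv j
      = Fintype.card ι

/-- An irredundant mixed orthogonal array of strength `k`: an MOA of strength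
`k` any two distinct rows of which have Hamming distance at least `k+1`. -/
def IsIrMOA {ι κ : Type*} [Fintype ι] [Fintype κ] [DecidableEq κ]
    (A : ι → κ → ℕ) (lv : κ → ℕ) (k : ℕ) : Prop :=
  IsMOA A lv k ∧ ∀ i i' : ι, i ≠ i' → k + 1 ≤ hamDist A i i'

/-- A difference scheme `D(r, c, d)`: an `r × c` matrix over `ℤ_d` such that
for any two distinct columns the `r` differences of corresponding entries
take each value of `ℤ_d` exactly `r/d` times. -/
def IsDiffScheme {r c d : ℕ} (B : Fin r → Fin c → ZMod d) : Prop :=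
  ∀ j j' : Fin c, j ≠ j' → ∀ g : ZMod d,
    (Finset.univ.filter fun i : Fin r => B i j - B i j' = g).card * d = r

/-- Let `A = OA(r, N, d, k)` such that some `N − s` of its
columns (a set `S`) form a subarray with minimum Hamming distance `≥ k+1`, and
for `w = 1,…,t` let `B w` be an MOA of strength `k` with `d` rows, `m w`
columns and levels `Blv w`. Then for all `n₁,…,n_t ≥ 0` with
`1 ≤ n₁+⋯+n_t ≤ s` and all `v_{iw} ≤ n_w` with `Σ v_{iw} ≥ 1` there is an
irredundant MOA of strength `k` with `r` rows, `N − s` columns of `d` levels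
and, for each `w, i`, exactly `v w i` columns of `Blv w i` levels. -/
lemma moa_expand {r N d k : ℕ} (hd : 0 < d) (A : Fin r → Fin N → ℕ)
    (hA : IsMOA A (fun _ => d) k)
    {κ' : Type*} [Fintype κ'] [DecidableEq κ']
    (φ : κ' → Fin N) (g : κ' → ℕ → ℕ) (lv' : κ' → ℕ)
    (hg : ∀ j y, y < d → g j y < lv' j)
    (hfiber : ∀ (c : Fin N) (I : Finset κ'), (∀ j ∈ I, φ j = c) → I.card ≤ k →
      ∀ x : κ' → ℕ, (∀ j ∈ I, x j < lv' j) →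
      Nat.card {y : ℕ // y < d ∧ ∀ j ∈ I, g j y = x j} * ∏ j ∈ I, lv' j = d) :
    IsMOA (fun a j' => g j' (A a (φ j'))) lv' k := by
  classical
  constructor
  · intro a j; exact hg _ _ (hA.1 a (φ j))
  · intro S' hS' x hx
    set P : Finset (Fin N) := S'.image φ with hP
    have hPcard : P.card ≤ k := le_trans Finset.card_image_le hS'
    set Y : Fin N → Finset ℕ := fun c =>
      (Finset.range d).filter fun y => ∀ j ∈ S'.filter (fun j => φ j = c), g j y = x j with hY
    have hYd : ∀ c ∈ P, (Y c).card * ∏ j ∈ S'.filter (fun j => φ j = c), lv' j = d := by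
      intro c _
      have hcc : (Y c).card
          = Nat.card {y : ℕ // y < d ∧ ∀ j ∈ S'.filter (fun j => φ j = c), g j y = x j} := by
        rw [← Nat.card_eq_finsetCard]
        exact Nat.card_congr (Equiv.subtypeEquivRight (fun y => by
          simp [hY, Finset.mem_filter, Finset.mem_range, and_assoc]))
      rw [hcc]
      exact hfiber c _ (fun j hj => (Finset.mem_filter.mp hj).2)
        (le_trans (Finset.card_le_card (Finset.filter_subset _ _)) hS')
        x (fun j hj => hx j (Finset.mem_filter.mp hj).1)
    set t : Finset (Fin N → ℕ) :=
      Fintype.piFinset (fun c => if c ∈ P then Y c else {0}) with ht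
    have htcard : t.card * ∏ j ∈ S', lv' j = d ^ P.card := by
      rw [ht, Fintype.card_piFinset]
      have h1 : ∏ c : Fin N, (if c ∈ P then Y c else ({0} : Finset ℕ)).card
          = ∏ c ∈ P, (Y c).card := by
        simp only [apply_ite Finset.card, Finset.card_singleton]
        rw [Finset.prod_ite_mem, Finset.univ_inter]
      rw [h1, ← Finset.prod_fiberwise_of_maps_to (g := φ) (t := P)
        (fun j hj => Finset.mem_image_of_mem φ hj) lv', ← Finset.prod_mul_distrib]
      calc ∏ c ∈ P, ((Y c).card * ∏ j ∈ S'.filter (fun j => φ j = c), lv' j)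
          = ∏ c ∈ P, d := Finset.prod_congr rfl hYd
        _ = d ^ P.card := Finset.prod_const d
    -- fiberwise row count
    set F : Fin r → (Fin N → ℕ) := fun a c => if c ∈ P then A a c else 0 with hF
    set s : Finset (Fin r) :=
      Finset.univ.filter fun a : Fin r => ∀ j ∈ S', g j (A a (φ j)) = x j with hs
    have hmaps : ∀ a ∈ s, F a ∈ t := by
      intro a ha
      rw [Fintype.mem_piFinset]
      intro c
      by_cases hc : c ∈ P
      · simp only [hF, if_pos hc, hY, Finset.mem_filter, Finset.mem_range]
        refine ⟨hA.1 a c, fun j hj => ?_⟩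
        obtain ⟨hjS, hjc⟩ := hj
        rw [← hjc]
        exact (Finset.mem_filter.mp ha).2 j hjS
      · simp [hF, if_neg hc, hc]
    have hcount := Finset.card_eq_sum_card_fiberwise hmaps
    have hfib : ∀ y ∈ t, (s.filter fun a => F a = y).card * d ^ P.card = r := by
      intro y hy
      have hyP : ∀ c ∈ P, y c ∈ Y c := by
        intro c hc
        have := Fintype.mem_piFinset.mp hy c
        rwa [if_pos hc] at this
      have hset : s.filter (fun a => F a = y)
          = Finset.univ.filter fun a => ∀ c ∈ P, A a c = y c := by
        ext a
        simp only [Finset.mem_filter, Finset.mem_univ, true_and, hs]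
        constructor
        · rintro ⟨_, hFa⟩ c hc
          simpa only [hF, if_pos hc] using congrFun hFa c
        · intro h
          have hFy : F a = y := by
            funext c
            by_cases hc : c ∈ P
            · rw [hF]; simp only [if_pos hc]; exact h c hc
            · have := Fintype.mem_piFinset.mp hy c
              rw [if_neg hc] at this
              rw [hF]; simp only [if_neg hc]
              exact (Finset.mem_singleton.mp this).symm
          refine ⟨fun j hj => ?_, hFy⟩
          have hφ : φ j ∈ P := Finset.mem_image_of_mem φ hj
          rw [h (φ j) hφ]
          have := (Finset.mem_filter.mp (hyP (φ j) hφ)).2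
          exact this j (Finset.mem_filter.mpr ⟨hj, rfl⟩)
      have hbound : ∀ c ∈ P, y c < d := by
        intro c hc
        exact Finset.mem_range.mp (Finset.mem_filter.mp (hyP c hc)).1
      have := hA.2 P hPcard y hbound
      rw [Finset.prod_const, Fintype.card_fin] at this
      rw [hset]
      convert this using 2
      congr
    have hfinal : s.card * (∏ j ∈ S', lv' j) * d ^ P.card = r * d ^ P.card := by
      calc s.card * (∏ j ∈ S', lv' j) * d ^ P.card
          = ((∑ y ∈ t, (s.filter fun a => F a = y).card) * d ^ P.card) * ∏ j ∈ S', lv' j := by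
            rw [hcount]; ring
        _ = (∑ y ∈ t, (s.filter fun a => F a = y).card * d ^ P.card) * ∏ j ∈ S', lv' j := by
            rw [Finset.sum_mul]
        _ = (∑ y ∈ t, r) * ∏ j ∈ S', lv' j := by
            rw [Finset.sum_congr rfl hfib]
        _ = r * (t.card * ∏ j ∈ S', lv' j) := by
            rw [Finset.sum_const, smul_eq_mul]; ring
        _ = r * d ^ P.card := by rw [htcard]
    have := Nat.eq_of_mul_eq_mul_right (pow_pos hd P.card) hfinal
    rw [Fintype.card_fin]
    exact this

set_option maxHeartbeats 1000000 in
theorem statement13 {r N d k s t : ℕ} (hs : s ≤ N)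
    (A : Fin r → Fin N → ℕ) (hA : IsMOA A (fun _ => d) k)
    (S : Finset (Fin N)) (hScard : S.card = N - s)
    (hSMD : k + 1 ≤ minDist (fun i (j : S) => A i j.1))
    (m : Fin t → ℕ)
    (B : (w : Fin t) → ℕ → Fin (m w) → ℕ)
    (Blv : (w : Fin t) → Fin (m w) → ℕ)
    (hB : ∀ w, IsMOA (fun a : Fin d => B w a.val) (Blv w) k)
    (n : Fin t → ℕ) (hn1 : 1 ≤ ∑ w, n w) (hns : ∑ w, n w ≤ s)
    (v : (w : Fin t) → Fin (m w) → ℕ)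
    (hv : ∀ w i, v w i ≤ n w)
    (hv1 : 1 ≤ ∑ w, ∑ i, v w i) :
    ∃ C : Fin r → (Fin (N - s) ⊕ (Σ w : Fin t, Σ i : Fin (m w), Fin (v w i))) → ℕ,
      IsIrMOA C (Sum.elim (fun _ => d) fun p => Blv p.1 p.2.1) k := by
  classical
  rcases Nat.eq_zero_or_pos r with hr | hr
  · subst hr
    exact ⟨fun a _ => 0, ⟨fun i => i.elim0, fun S' hS' x hx => by simp⟩, fun i => i.elim0⟩
  have hN : 0 < N := by omega
  have hd : 0 < d := lt_of_le_of_lt (Nat.zero_le _) (hA.1 ⟨0, hr⟩ ⟨0, hN⟩)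
  have hcard : Fintype.card (Σ w : Fin t, Fin (n w))
      ≤ Fintype.card (↥(Sᶜ : Finset (Fin N))) := by
    simp only [Fintype.card_sigma, Fintype.card_fin, Fintype.card_coe,
      Finset.card_compl, hScard, Fintype.card_fin]
    omega
  obtain ⟨F⟩ := Function.Embedding.nonempty_of_card_le hcard
  set e := S.orderIsoOfFin hScard with he
  set φ : (Fin (N - s) ⊕ (Σ w : Fin t, Σ i : Fin (m w), Fin (v w i))) → Fin N :=
    Sum.elim (fun j => (e j : Fin N))
      (fun p => (F ⟨p.1, Fin.castLE (hv p.1 p.2.1) p.2.2⟩ : Fin N)) with hφdef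
  set g : (Fin (N - s) ⊕ (Σ w : Fin t, Σ i : Fin (m w), Fin (v w i))) → ℕ → ℕ :=
    Sum.elim (fun _ => id) (fun p y => B p.1 y p.2.1) with hgdef
  refine ⟨fun a j' => g j' (A a (φ j')), moa_expand hd A hA φ g _ ?_ ?_, ?_⟩
  · -- bound condition
    rintro (j | ⟨w, i, jj⟩) y hy
    · exact hy
    · exact (hB w).1 ⟨y, hy⟩ i
  · -- fiber condition
    intro c I hφI hIcard x hx
    rcases I.eq_empty_or_nonempty with hI | ⟨j₀, hj₀⟩
    · subst hI
      have hdd : Nat.card {y : ℕ // y < d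
          ∧ ∀ j ∈ (∅ : Finset (Fin (N - s) ⊕ (Σ w : Fin t, Σ i : Fin (m w), Fin (v w i)))),
            g j y = x j} = d := by
        have e1 : {y : ℕ // y < d
            ∧ ∀ j ∈ (∅ : Finset (Fin (N - s) ⊕ (Σ w : Fin t, Σ i : Fin (m w), Fin (v w i)))),
              g j y = x j} ≃ Fin d :=
          { toFun := fun y => ⟨y.1, y.2.1⟩
            invFun := fun a => ⟨a.val, a.isLt, by simp⟩
            left_inv := fun y => rfl
            right_inv := fun a => rfl }
        rw [Nat.card_congr e1, Nat.card_eq_fintype_card, Fintype.card_fin]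
      simpa using hdd
    cases j₀ with
    | inl a₀ =>
      have hc : (e a₀ : Fin N) = c := hφI _ hj₀
      have hIeq : I = {Sum.inl a₀} := by
        apply Finset.eq_singleton_iff_unique_mem.mpr
        refine ⟨hj₀, ?_⟩
        intro j hj
        cases j with
        | inl a' =>
          have h1 : (e a' : Fin N) = c := hφI _ hj
          have h2 : e a' = e a₀ := Subtype.ext (h1.trans hc.symm)
          rw [e.injective h2]
        | inr q =>
          exfalso
          have h1 : (F ⟨q.1, Fin.castLE (hv q.1 q.2.1) q.2.2⟩ : Fin N) = c := hφI _ hj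
          have h2 := Finset.mem_compl.mp (F ⟨q.1, Fin.castLE (hv q.1 q.2.1) q.2.2⟩).2
          rw [h1, ← hc] at h2
          exact h2 (e a₀).2
      subst hIeq
      have hxd : x (Sum.inl a₀) < d := hx _ (Finset.mem_singleton_self _)
      have hone : Nat.card {y : ℕ // y < d
          ∧ ∀ j ∈ ({Sum.inl a₀} : Finset (Fin (N - s) ⊕ (Σ w : Fin t, Σ i : Fin (m w), Fin (v w i)))),
            g j y = x j} = 1 := by
        have e1 : {y : ℕ // y < d
            ∧ ∀ j ∈ ({Sum.inl a₀} : Finset (Fin (N - s) ⊕ (Σ w : Fin t, Σ i : Fin (m w), Fin (v w i)))),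
              g j y = x j} ≃ PUnit.{1} :=
          { toFun := fun _ => PUnit.unit
            invFun := fun _ => ⟨x (Sum.inl a₀), hxd, by
              intro j hj
              rw [Finset.mem_singleton] at hj
              subst hj
              rfl⟩
            left_inv := fun y => by
              apply Subtype.ext
              exact (y.2.2 _ (Finset.mem_singleton_self _)).symm
            right_inv := fun _ => rfl }
        rw [Nat.card_congr e1, Nat.card_eq_fintype_card, Fintype.card_punit]
      rw [hone, one_mul, Finset.prod_singleton]
      rfl
    | inr q =>
      obtain ⟨w, i₀, jj₀⟩ := q
      have hc : (F ⟨w, Fin.castLE (hv w i₀) jj₀⟩ : Fin N) = c := hφI _ hj₀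
      have hnf : ∀ j ∈ I, ∃ (i : Fin (m w)) (hji : (jj₀ : ℕ) < v w i),
          j = Sum.inr ⟨w, i, ⟨(jj₀ : ℕ), hji⟩⟩ := by
        intro j hj
        cases j with
        | inl a' =>
          exfalso
          have h1 : (e a' : Fin N) = c := hφI _ hj
          have h2 := Finset.mem_compl.mp (F ⟨w, Fin.castLE (hv w i₀) jj₀⟩).2
          rw [hc] at h2
          rw [← h1] at h2
          exact h2 (e a').2
        | inr q' =>
          obtain ⟨w₂, i₂, j₂⟩ := q'
          have h1 : (F ⟨w₂, Fin.castLE (hv w₂ i₂) j₂⟩ : Fin N) = c := hφI _ hj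
          have h2 : (⟨w₂, Fin.castLE (hv w₂ i₂) j₂⟩ : Σ w, Fin (n w))
              = ⟨w, Fin.castLE (hv w i₀) jj₀⟩ :=
            F.injective (Subtype.ext (h1.trans hc.symm))
          obtain ⟨hw, hj2⟩ := Sigma.mk.inj_iff.mp h2
          subst hw
          have hval : (j₂ : ℕ) = (jj₀ : ℕ) := by
            have h3 := eq_of_heq hj2
            simpa [Fin.ext_iff] using h3
          refine ⟨i₂, hval ▸ j₂.isLt, ?_⟩
          have h4 : j₂ = ⟨(jj₀ : ℕ), hval ▸ j₂.isLt⟩ := by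
            apply Fin.ext
            simpa using hval
          exact congrArg Sum.inr (congrArg _ (congrArg _ h4))
      set ext : (Fin (N - s) ⊕ (Σ w : Fin t, Σ i : Fin (m w), Fin (v w i))) → Fin (m w) :=
        fun j => match j with
          | Sum.inl _ => i₀
          | Sum.inr q => if h : q.1 = w then h ▸ q.2.1 else i₀ with hextdef
      have hext : ∀ (i : Fin (m w)) (jj : Fin (v w i)), ext (Sum.inr ⟨w, i, jj⟩) = i := by
        intro i jj
        show (if h : w = w then h ▸ i else i₀) = i
        rw [dif_pos rfl]
      set x' : Fin (m w) → ℕ := fun i =>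
        if h : (jj₀ : ℕ) < v w i then x (Sum.inr ⟨w, i, ⟨(jj₀ : ℕ), h⟩⟩) else 0 with hx'def
      set T : Finset (Fin (m w)) := I.image ext with hT
      have hext_mem : ∀ (i : Fin (m w)) (hji : (jj₀ : ℕ) < v w i),
          Sum.inr ⟨w, i, ⟨(jj₀ : ℕ), hji⟩⟩ ∈ I → i ∈ T :=
        fun i hji hj => Finset.mem_image.mpr ⟨_, hj, hext i _⟩
      have hTval : ∀ i ∈ T, ∃ hji : (jj₀ : ℕ) < v w i,
          Sum.inr ⟨w, i, ⟨(jj₀ : ℕ), hji⟩⟩ ∈ I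
            ∧ x' i = x (Sum.inr ⟨w, i, ⟨(jj₀ : ℕ), hji⟩⟩) := by
        intro i hi
        obtain ⟨j, hjI, hji_eq⟩ := Finset.mem_image.mp hi
        obtain ⟨i', hji', rfl⟩ := hnf j hjI
        rw [hext] at hji_eq
        subst hji_eq
        exact ⟨hji', hjI, dif_pos hji'⟩
      have hequiv : ∀ y : ℕ, (∀ i ∈ T, B w y i = x' i) ↔ (∀ j ∈ I, g j y = x j) := by
        intro y
        constructor
        · intro h j hj
          obtain ⟨i, hji, rfl⟩ := hnf j hj
          have hiT : i ∈ T := hext_mem i hji hj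
          obtain ⟨hji2, _, hx'i⟩ := hTval i hiT
          show B w y i = x (Sum.inr ⟨w, i, ⟨(jj₀ : ℕ), hji⟩⟩)
          rw [h i hiT, hx'i]
        · intro h i hi
          obtain ⟨hji, hjI, hx'i⟩ := hTval i hi
          rw [hx'i]
          exact h _ hjI
      have hinj : ∀ j1 ∈ I, ∀ j2 ∈ I, ext j1 = ext j2 → j1 = j2 := by
        intro j1 h1 j2 h2 hee
        obtain ⟨i1, hi1, rfl⟩ := hnf j1 h1
        obtain ⟨i2, hi2, rfl⟩ := hnf j2 h2
        rw [hext, hext] at hee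
        subst hee
        rfl
      have hTcard : T.card ≤ k := le_trans Finset.card_image_le hIcard
      have hx'lt : ∀ i ∈ T, x' i < Blv w i := by
        intro i hi
        obtain ⟨hji, hjI, hx'i⟩ := hTval i hi
        rw [hx'i]
        exact hx _ hjI
      have hBw := (hB w).2 T hTcard x' hx'lt
      rw [Fintype.card_fin] at hBw
      have hprods : (∏ j ∈ I, (Sum.elim (fun _ => d) fun p => Blv p.1 p.2.1) j)
          = ∏ i ∈ T, Blv w i := by
        rw [hT, Finset.prod_image hinj]
        apply Finset.prod_congr rfl
        intro j hj
        obtain ⟨i, hji, rfl⟩ := hnf j hj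
        simp [hext]
      rw [← Fintype.card_subtype] at hBw
      rw [Fintype.card_eq_nat_card] at hBw
      have hNat : Nat.card {y : ℕ // y < d ∧ ∀ j ∈ I, g j y = x j}
          = Nat.card {a : Fin d // ∀ i ∈ T, B w a.val i = x' i} :=
        Nat.card_congr
          { toFun := fun y => ⟨⟨y.1, y.2.1⟩, (hequiv y.1).mpr y.2.2⟩
            invFun := fun a => ⟨a.1.val, a.1.isLt, (hequiv a.1.val).mp a.2⟩
            left_inv := fun y => rfl
            right_inv := fun a => rfl }
      rw [hprods, hNat]
      exact hBw
  · -- irredundancy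
    intro a a' hne
    have h1 : minDist (fun i (j : S) => A i j.1) ≤ hamDist (fun i (j : S) => A i j.1) a a' :=
      Nat.sInf_le ⟨a, a', hne, rfl⟩
    refine le_trans hSMD (le_trans h1 ?_)
    unfold hamDist
    apply Finset.card_le_card_of_injOn (fun j => Sum.inl (e.symm j))
    · intro j hj
      simp only [Finset.mem_coe, Finset.mem_filter, Finset.mem_univ, true_and] at hj ⊢
      have hj' : ((e (e.symm j) : Fin N)) = (j : Fin N) := by rw [e.apply_symm_apply]
      show ¬ A a (e (e.symm j) : Fin N) = A a' (e (e.symm j) : Fin N)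
      rw [hj']
      exact hj
    · intro j1 _ j2 _ h12
      exact e.symm.injective (Sum.inl.inj h12)
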